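/- Let p be a prime, l ≥ 1 and k ≥ 1 integers, and a, b, u, t integers with gcd(b, p) = 1 and gcd(a, p) = 1. Then Ŝ(a, u, t, b, 1, p^l) = e(ū b / p^l) if gcd(u, p) = 1 and Ŝ(a, u, t, b, 1, p^l) = 0 if p | u, where ū is a multiplicative inverse of u modulo p^l. Symmetrically, Ŝ(a, u, t, b, p^k, 1) = e(t̄ a / p^k) if gcd(t, p) = 1 and equals 0 if p | t, where t̄ is a multiplicative inverse of t modulo p^k. -/

import Mathlib

open scoped BigOperators

/-- `e(x) = exp(2 π i x)`. -/
noncomputable def eC (x : ℝ) : ℂ := Complex.exp (2 * Real.pi * Complex.I * x)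

/-- The GL(3) long-element Kloosterman sum `S(m₁,m₂,n₁,n₂;D₁,D₂)`.
Since the summand is independent of the admissible choices of `Y₁,Z₁,Y₂,Z₂`
(and each admissible `(B₁,C₁)` has exactly `D₁` admissible pairs `(Y₁,Z₁)` modulo `D₁`,
similarly for `(Y₂,Z₂)`), we define the sum by averaging over all admissible choices. -/
noncomputable def SGL3 (m1 m2 n1 n2 : ℤ) (D1 D2 : ℕ) : ℂ :=
  ((D1 : ℂ) * (D2 : ℂ))⁻¹ *
    ∑ B1 ∈ Finset.range D1, ∑ C1 ∈ Finset.range D1,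
      ∑ B2 ∈ Finset.range D2, ∑ C2 ∈ Finset.range D2,
        ∑ Y1 ∈ Finset.range D1, ∑ Z1 ∈ Finset.range D1,
          ∑ Y2 ∈ Finset.range D2, ∑ Z2 ∈ Finset.range D2,
            if Nat.gcd B1 (Nat.gcd C1 D1) = 1 ∧ Nat.gcd B2 (Nat.gcd C2 D2) = 1 ∧
                ((D1 : ℤ) * (D2 : ℤ)) ∣ ((D1 : ℤ) * (C2 : ℤ) + (B1 : ℤ) * (B2 : ℤ) + (C1 : ℤ) * (D2 : ℤ)) ∧
                (D1 : ℤ) ∣ ((Y1 : ℤ) * (B1 : ℤ) + (Z1 : ℤ) * (C1 : ℤ) - 1) ∧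
                (D2 : ℤ) ∣ ((Y2 : ℤ) * (B2 : ℤ) + (Z2 : ℤ) * (C2 : ℤ) - 1) then
              eC (((m1 * (B1 : ℤ) + n1 * ((Y1 : ℤ) * (D2 : ℤ) - (Z1 : ℤ) * (B2 : ℤ)) : ℤ) : ℝ) / (D1 : ℝ)) *
                eC (((m2 * (B2 : ℤ) + n2 * ((Y2 : ℤ) * (D1 : ℤ) - (Z2 : ℤ) * (B1 : ℤ)) : ℤ) : ℝ) / (D2 : ℝ))
            else 0

/-- The classical Kloosterman sum `S(m,n;c) = ∑_{x (c), (x,c)=1} e((m x + n x̄)/c)`. -/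
noncomputable def Kl (m n : ℤ) (c : ℕ) : ℂ :=
  ∑ x ∈ Finset.range c,
    if Nat.gcd x c = 1 then
      eC (((m * (x : ℤ) + n * ((((x : ZMod c)⁻¹).val : ℕ) : ℤ) : ℤ) : ℝ) / (c : ℝ))
    else 0

/-- The partial (middle two-variable) Fourier transform of the GL(3) Kloosterman sum. -/
noncomputable def Shat (a u t b : ℤ) (D1 D2 : ℕ) : ℂ :=
  ((D1 : ℂ) * (D2 : ℂ))⁻¹ *
    ∑ x ∈ Finset.range D1, ∑ y ∈ Finset.range D2,
      SGL3 a (y : ℤ) (x : ℤ) b D1 D2 * eC (((-((x : ℤ) * t) : ℤ) : ℝ) / (D1 : ℝ)) *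
        eC (((-((y : ℤ) * u) : ℤ) : ℝ) / (D2 : ℝ))

/-- `R(t,D₁,D₂) = max_{(ab,D₁)=1} ∑_{u (D₂)} |Ŝ(a,u,bt,1,D₁,D₂)|`, realized as a supremum. -/
noncomputable def Rfun (t : ℤ) (D1 D2 : ℕ) : ℝ :=
  sSup {r : ℝ | ∃ a b : ℤ, Int.gcd (a * b) D1 = 1 ∧
    r = ∑ u ∈ Finset.range D2, norm (Shat a (u : ℤ) (b * t) 1 D1 D2)}

/-- The quantity `M(β)` with outer sum over `q ≤ Q` and moduli `c ≤ X/q`. -/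
noncomputable def Mgen (Q X : ℝ) (β : ℕ → ℂ) : ℝ :=
  ∑ q ∈ Finset.Icc 1 ⌊Q⌋₊, ∑ d1 ∈ q.divisors,
    ((d1 : ℝ) / (q : ℝ)) *
      ∑ c ∈ Finset.Icc 1 ⌊X / (q : ℝ)⌋₊,
        if Nat.gcd c q = 1 then
          ∑ tt ∈ Finset.range c,
            if Nat.gcd tt c = 1 then
              (norm (∑ᶠ (n : ℕ) (_ : Nat.gcd n q = d1),
                β n * eC (((tt * n : ℕ) : ℝ) / (c : ℝ)))) ^ 2
            else 0
        else 0

/-- The bilinear form `𝒮 = ∑_{D₁,D₂,m,n} γ_{D₁,D₂} α_m β_n S(1,m,n,1;D₁,D₂)`. -/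
noncomputable def Sbil (γ : ℕ → ℕ → ℂ) (α β : ℕ → ℂ) : ℂ :=
  ∑ᶠ (D1 : ℕ) (D2 : ℕ) (m : ℕ) (n : ℕ),
    γ D1 D2 * α m * β n * SGL3 1 (m : ℤ) (n : ℤ) 1 D1 D2

/-- `‖β‖ = (∑_n |β_n|²)^{1/2}`. -/
noncomputable def seqNorm (β : ℕ → ℂ) : ℝ := Real.sqrt (∑ᶠ n : ℕ, norm (β n) ^ 2)

/-! ### Auxiliary lemmas -/

lemma eC_zero : eC 0 = 1 := by simp [eC]

lemma eC_add (x y : ℝ) : eC (x + y) = eC x * eC y := by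
  simp [eC, mul_add, Complex.exp_add]

lemma eC_int (n : ℤ) : eC n = 1 := by
  rw [eC, show ((2:ℂ) * Real.pi * Complex.I * (n:ℝ)) = (n:ℤ) * (2 * Real.pi * Complex.I) by push_cast; ring]
  exact Complex.exp_int_mul_two_pi_mul_I n

lemma eC_congr {c : ℕ} (hc : c ≠ 0) {m n : ℤ} (h : (c:ℤ) ∣ m - n) :
    eC ((m : ℝ) / c) = eC ((n : ℝ) / c) := by
  obtain ⟨d, hd⟩ := h
  have hm : m = n + c * d := by linarith
  subst hm
  have : ((n + c * d : ℤ) : ℝ) / c = (n : ℝ) / c + (d : ℤ) := by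
    push_cast
    field_simp
  rw [this, eC_add, eC_int, mul_one]

lemma eC_pow (x : ℝ) (n : ℕ) : eC x ^ n = eC (n * x) := by
  rw [eC, eC, ← Complex.exp_nat_mul]
  congr 1
  push_cast
  ring

lemma eC_div_add (c : ℝ) (m n : ℤ) :
    eC (((m + n : ℤ) : ℝ) / c) = eC ((m : ℝ) / c) * eC ((n : ℝ) / c) := by
  push_cast; rw [add_div, eC_add]

lemma sum_eC_orth (c : ℕ) (hc : 0 < c) (k : ℤ) :
    ∑ y ∈ Finset.range c, eC (((y * k : ℤ) : ℝ) / c) = if (c:ℤ) ∣ k then (c:ℂ) else 0 := by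
  have hterm : ∀ y : ℕ, eC (((y * k : ℤ) : ℝ) / c) = eC ((k:ℝ)/c) ^ y := by
    intro y
    rw [eC_pow]
    congr 1
    push_cast
    ring
  rw [Finset.sum_congr rfl (fun y _ => hterm y)]
  by_cases h : (c:ℤ) ∣ k
  · rw [if_pos h]
    obtain ⟨d, hd⟩ := h
    have hz : eC ((k:ℝ)/c) = 1 := by
      have : (k:ℝ)/c = ((d:ℤ):ℝ) := by
        rw [hd]; push_cast; field_simp
      rw [this, eC_int]
    simp [hz]
  · rw [if_neg h]
    have hz1 : eC ((k:ℝ)/c) ≠ 1 := by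
      intro hz
      apply h
      rw [eC, Complex.exp_eq_one_iff] at hz
      obtain ⟨n, hn⟩ := hz
      have hpi : (2 * Real.pi * Complex.I : ℂ) ≠ 0 := by
        simp [Real.pi_ne_zero, Complex.I_ne_zero]
      have h2 : (((k:ℝ)/c : ℝ) : ℂ) = (n : ℂ) :=
        mul_left_cancel₀ hpi (hn.trans (by ring))
      have hr : (k:ℝ)/c = (n:ℝ) := by exact_mod_cast h2
      have hcr : (c:ℝ) ≠ 0 := by exact_mod_cast hc.ne'
      have : (k:ℝ) = c * n := by
        field_simp at hr; linarith
      exact ⟨n, by exact_mod_cast this⟩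
    have hzc : eC ((k:ℝ)/c) ^ c = 1 := by
      rw [eC_pow]
      have : (c:ℝ) * ((k:ℝ)/c) = ((k:ℤ):ℝ) := by
        field_simp
      rw [this, eC_int]
    rw [geom_sum_eq hz1 c, hzc]
    simp

lemma aux_quad (D : ℕ) (hD : 0 < D) (m n : ℤ) :
    ((D:ℂ)⁻¹ *
      ∑ B ∈ Finset.range D, ∑ C ∈ Finset.range D, ∑ Y ∈ Finset.range D, ∑ Z ∈ Finset.range D,
        if Nat.gcd B (Nat.gcd C D) = 1 ∧ (D:ℤ) ∣ (C:ℤ) ∧ (D:ℤ) ∣ ((Y:ℤ) * (B:ℤ) + (Z:ℤ) * (C:ℤ) - 1) then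
          eC (((m * (B:ℤ) + n * (Y:ℤ) : ℤ) : ℝ) / (D:ℝ))
        else 0) = Kl m n D := by
  haveI : NeZero D := ⟨hD.ne'⟩
  have hDC : (D:ℂ) ≠ 0 := Nat.cast_ne_zero.2 hD.ne'
  have step : ∀ B ∈ Finset.range D,
      (∑ C ∈ Finset.range D, ∑ Y ∈ Finset.range D, ∑ Z ∈ Finset.range D,
        if Nat.gcd B (Nat.gcd C D) = 1 ∧ (D:ℤ) ∣ (C:ℤ) ∧ (D:ℤ) ∣ ((Y:ℤ) * (B:ℤ) + (Z:ℤ) * (C:ℤ) - 1) then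
          eC (((m * (B:ℤ) + n * (Y:ℤ) : ℤ) : ℝ) / (D:ℝ))
        else 0)
      = (D:ℂ) * (if Nat.gcd B D = 1 then
          eC (((m * (B:ℤ) + n * ((((B : ZMod D)⁻¹).val : ℕ) : ℤ) : ℤ) : ℝ) / (D:ℝ)) else 0) := by
    intro B _
    rw [Finset.sum_eq_single_of_mem 0 (Finset.mem_range.2 hD)]
    · simp only [Nat.cast_zero, Nat.gcd_zero_left, dvd_zero, mul_zero, add_zero, true_and, and_true]
      have hz : ∀ Y : ℕ, (∑ Z ∈ Finset.range D,
          if Nat.gcd B D = 1 ∧ (D:ℤ) ∣ ((Y:ℤ) * (B:ℤ) - 1) then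
            eC (((m * (B:ℤ) + n * (Y:ℤ) : ℤ) : ℝ) / (D:ℝ)) else 0)
          = (D:ℂ) * (if Nat.gcd B D = 1 ∧ (D:ℤ) ∣ ((Y:ℤ) * (B:ℤ) - 1) then
            eC (((m * (B:ℤ) + n * (Y:ℤ) : ℤ) : ℝ) / (D:ℝ)) else 0) := by
        intro Y
        rw [Finset.sum_const, Finset.card_range, nsmul_eq_mul]
      rw [Finset.sum_congr rfl (fun Y _ => hz Y), ← Finset.mul_sum]
      congr 1
      by_cases hB : Nat.gcd B D = 1
      · rw [if_pos hB]
        set v := ((B : ZMod D)⁻¹).val with hv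
        have hunit : IsUnit (B : ZMod D) := (ZMod.isUnit_iff_coprime B D).2 hB
        have hvB : (D:ℤ) ∣ ((v:ℤ) * (B:ℤ) - 1 : ℤ) := by
          have : (((v:ℤ) * (B:ℤ) - 1 : ℤ) : ZMod D) = 0 := by
            push_cast
            rw [ZMod.natCast_val, ZMod.cast_id, ZMod.inv_mul_of_unit _ hunit]
            ring
          rwa [ZMod.intCast_zmod_eq_zero_iff_dvd] at this
        rw [Finset.sum_eq_single_of_mem v (Finset.mem_range.2 (ZMod.val_lt _))]
        · rw [if_pos ⟨hB, hvB⟩]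
        · intro Y hY hYv
          rw [if_neg]
          rintro ⟨-, hdvd⟩
          apply hYv
          have h1 : ((Y : ZMod D)) * (B : ZMod D) = 1 := by
            have := (ZMod.intCast_zmod_eq_zero_iff_dvd _ D).2 hdvd
            push_cast at this
            linear_combination this
          have h2 : (Y : ZMod D) = (B : ZMod D)⁻¹ := by
            have hBinv : (B : ZMod D) * (B : ZMod D)⁻¹ = 1 := ZMod.mul_inv_of_unit _ hunit
            calc (Y : ZMod D) = (Y : ZMod D) * ((B : ZMod D) * (B : ZMod D)⁻¹) := by
                  rw [hBinv, mul_one]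
              _ = ((Y : ZMod D) * (B : ZMod D)) * (B : ZMod D)⁻¹ := by ring
              _ = (B : ZMod D)⁻¹ := by rw [h1, one_mul]
          have h3 : (Y : ZMod D).val = v := by rw [h2]
          rwa [ZMod.val_cast_of_lt (Finset.mem_range.1 hY)] at h3
      · rw [if_neg hB]
        apply Finset.sum_eq_zero; intro Y _
        rw [if_neg]; rintro ⟨h1, -⟩; exact hB h1
    · intro C hC hC0
      apply Finset.sum_eq_zero; intro Y _
      apply Finset.sum_eq_zero; intro Z _
      rw [if_neg]
      rintro ⟨-, h2, -⟩
      have hd : D ∣ C := Int.ofNat_dvd.mp h2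
      exact absurd (Nat.le_of_dvd (Nat.pos_of_ne_zero hC0) hd) (not_le.2 (Finset.mem_range.1 hC))
  rw [Finset.sum_congr rfl step, ← Finset.mul_sum, ← mul_assoc, inv_mul_cancel₀ hDC, one_mul]
  rfl

lemma SGL3_one_left (m1 m2 n1 n2 : ℤ) (D : ℕ) (hD : 0 < D) :
    SGL3 m1 m2 n1 n2 1 D = Kl m2 n2 D := by
  unfold SGL3
  simp only [Finset.sum_range_one, Nat.cast_one, one_mul, Nat.cast_zero, mul_zero, zero_mul,
    Nat.gcd_zero_left, Nat.gcd_one_right, add_zero, zero_add, sub_zero,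
    mul_one, one_dvd, true_and, and_true, div_one, Int.cast_zero, eC_zero]
  exact aux_quad D hD m2 n2

lemma SGL3_one_right (m1 m2 n1 n2 : ℤ) (D : ℕ) (hD : 0 < D) :
    SGL3 m1 m2 n1 n2 D 1 = Kl m1 n1 D := by
  unfold SGL3
  simp only [Finset.sum_range_one, Nat.cast_one, one_mul, Nat.cast_zero, mul_zero, zero_mul,
    Nat.gcd_zero_left, Nat.gcd_one_right, add_zero, zero_add, sub_zero,
    mul_one, one_dvd, true_and, and_true, div_one, Int.cast_zero, eC_zero]
  exact aux_quad D hD m1 n1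

lemma Shat_one_left (D : ℕ) (hD : 0 < D) (a u t b : ℤ) :
    Shat a u t b 1 D = ∑ B ∈ Finset.range D,
      if Nat.gcd B D = 1 ∧ (D:ℤ) ∣ ((B:ℤ) - u) then
        eC (((b * ((((B : ZMod D)⁻¹).val : ℕ) : ℤ) : ℤ) : ℝ) / (D:ℝ)) else 0 := by
  have hDC : (D:ℂ) ≠ 0 := Nat.cast_ne_zero.2 hD.ne'
  unfold Shat
  simp only [Finset.sum_range_one, Nat.cast_one, one_mul, Nat.cast_zero, zero_mul, neg_zero,
    Int.cast_zero, div_one, eC_zero, mul_one,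
    fun m1 m2 n1 n2 => SGL3_one_left m1 m2 n1 n2 D hD]
  have key : ∀ y ∈ Finset.range D, Kl (y:ℤ) b D * eC (((-((y:ℤ) * u) : ℤ) : ℝ) / (D:ℝ))
      = ∑ B ∈ Finset.range D, (if Nat.gcd B D = 1 then
          eC (((b * ((((B : ZMod D)⁻¹).val : ℕ) : ℤ) : ℤ) : ℝ) / (D:ℝ)) *
            eC ((((y:ℤ) * ((B:ℤ) - u) : ℤ) : ℝ) / (D:ℝ)) else 0) := by
    intro y _
    unfold Kl
    rw [Finset.sum_mul]
    refine Finset.sum_congr rfl fun B _ => ?_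
    by_cases hB : Nat.gcd B D = 1
    · rw [if_pos hB, if_pos hB]
      have h1 : eC ((((y:ℤ) * (B:ℤ) + b * ((((B : ZMod D)⁻¹).val : ℕ) : ℤ) : ℤ) : ℝ) / (D:ℝ))
          = eC (((b * ((((B : ZMod D)⁻¹).val : ℕ) : ℤ) : ℤ) : ℝ) / (D:ℝ)) *
            eC ((((y:ℤ) * (B:ℤ) : ℤ) : ℝ) / (D:ℝ)) := by
        rw [← eC_div_add]
        congr 2
        push_cast; ring
      have h2 : eC ((((y:ℤ) * (B:ℤ) : ℤ) : ℝ) / (D:ℝ)) * eC (((-((y:ℤ) * u) : ℤ) : ℝ) / (D:ℝ))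
          = eC ((((y:ℤ) * ((B:ℤ) - u) : ℤ) : ℝ) / (D:ℝ)) := by
        rw [← eC_div_add]
        congr 2
        push_cast; ring
      rw [h1, mul_assoc, h2]
    · rw [if_neg hB, if_neg hB, zero_mul]
  rw [Finset.sum_congr rfl key, Finset.sum_comm, Finset.mul_sum]
  refine Finset.sum_congr rfl fun B _ => ?_
  by_cases hB : Nat.gcd B D = 1
  · simp only [hB, if_true, true_and]
    rw [← Finset.mul_sum]
    rw [sum_eC_orth D hD ((B:ℤ) - u)]
    by_cases hdvd : (D:ℤ) ∣ ((B:ℤ) - u)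
    · rw [if_pos hdvd, if_pos hdvd]
      field_simp
    · rw [if_neg hdvd, if_neg hdvd, mul_zero, mul_zero]
  · simp [hB]

lemma Shat_one_right (D : ℕ) (hD : 0 < D) (a u t b : ℤ) :
    Shat a u t b D 1 = ∑ B ∈ Finset.range D,
      if Nat.gcd B D = 1 ∧ (D:ℤ) ∣ (((((B : ZMod D)⁻¹).val : ℕ) : ℤ) - t) then
        eC (((a * (B:ℤ) : ℤ) : ℝ) / (D:ℝ)) else 0 := by
  have hDC : (D:ℂ) ≠ 0 := Nat.cast_ne_zero.2 hD.ne'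
  unfold Shat
  simp only [Finset.sum_range_one, Nat.cast_one, mul_one, Nat.cast_zero, zero_mul, neg_zero,
    Int.cast_zero, div_one, eC_zero, one_mul,
    fun m1 m2 n1 n2 => SGL3_one_right m1 m2 n1 n2 D hD]
  have key : ∀ x ∈ Finset.range D, Kl a (x:ℤ) D * eC (((-((x:ℤ) * t) : ℤ) : ℝ) / (D:ℝ))
      = ∑ B ∈ Finset.range D, (if Nat.gcd B D = 1 then
          eC (((a * (B:ℤ) : ℤ) : ℝ) / (D:ℝ)) *
            eC ((((x:ℤ) * (((((B : ZMod D)⁻¹).val : ℕ) : ℤ) - t) : ℤ) : ℝ) / (D:ℝ)) else 0) := by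
    intro x _
    unfold Kl
    rw [Finset.sum_mul]
    refine Finset.sum_congr rfl fun B _ => ?_
    by_cases hB : Nat.gcd B D = 1
    · rw [if_pos hB, if_pos hB]
      have h1 : eC (((a * (B:ℤ) + (x:ℤ) * ((((B : ZMod D)⁻¹).val : ℕ) : ℤ) : ℤ) : ℝ) / (D:ℝ))
          = eC (((a * (B:ℤ) : ℤ) : ℝ) / (D:ℝ)) *
            eC ((((x:ℤ) * ((((B : ZMod D)⁻¹).val : ℕ) : ℤ) : ℤ) : ℝ) / (D:ℝ)) := by
        rw [← eC_div_add]
      have h2 : eC ((((x:ℤ) * ((((B : ZMod D)⁻¹).val : ℕ) : ℤ) : ℤ) : ℝ) / (D:ℝ)) *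
            eC (((-((x:ℤ) * t) : ℤ) : ℝ) / (D:ℝ))
          = eC ((((x:ℤ) * (((((B : ZMod D)⁻¹).val : ℕ) : ℤ) - t) : ℤ) : ℝ) / (D:ℝ)) := by
        rw [← eC_div_add]
        congr 2
        push_cast; ring
      rw [h1, mul_assoc, h2]
    · rw [if_neg hB, if_neg hB, zero_mul]
  rw [Finset.sum_congr rfl key, Finset.sum_comm, Finset.mul_sum]
  refine Finset.sum_congr rfl fun B _ => ?_
  by_cases hB : Nat.gcd B D = 1
  · simp only [hB, if_true, true_and]
    rw [← Finset.mul_sum]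
    rw [sum_eC_orth D hD (((((B : ZMod D)⁻¹).val : ℕ) : ℤ) - t)]
    by_cases hdvd : (D:ℤ) ∣ (((((B : ZMod D)⁻¹).val : ℕ) : ℤ) - t)
    · rw [if_pos hdvd, if_pos hdvd]
      field_simp
    · rw [if_neg hdvd, if_neg hdvd, mul_zero, mul_zero]
  · simp [hB]

lemma sum_eval_coprime (D : ℕ) (hD : 0 < D) (b u uinv : ℤ)
    (h : (u : ZMod D) * (uinv : ZMod D) = 1) :
    (∑ B ∈ Finset.range D, if Nat.gcd B D = 1 ∧ (D:ℤ) ∣ ((B:ℤ) - u) then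
        eC (((b * ((((B : ZMod D)⁻¹).val : ℕ) : ℤ) : ℤ) : ℝ) / (D:ℝ)) else 0)
      = eC (((uinv * b : ℤ) : ℝ) / (D:ℝ)) := by
  haveI : NeZero D := ⟨hD.ne'⟩
  have hunit : IsUnit (u : ZMod D) := IsUnit.of_mul_eq_one _ h
  set B0 := (u : ZMod D).val with hB0
  have hB0cast : ((B0 : ℕ) : ZMod D) = (u : ZMod D) := by
    rw [hB0, ZMod.natCast_val, ZMod.cast_id]
  have hinv : ((u : ZMod D))⁻¹ = (uinv : ZMod D) := by
    calc (u : ZMod D)⁻¹ = (u : ZMod D)⁻¹ * ((u : ZMod D) * (uinv : ZMod D)) := by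
          rw [h, mul_one]
      _ = ((u : ZMod D)⁻¹ * (u : ZMod D)) * (uinv : ZMod D) := by ring
      _ = (uinv : ZMod D) := by rw [ZMod.inv_mul_of_unit _ hunit, one_mul]
  rw [Finset.sum_eq_single_of_mem B0 (Finset.mem_range.2 (ZMod.val_lt _))]
  · have hc1 : Nat.gcd B0 D = 1 := by
      have := ZMod.val_coe_unit_coprime hunit.unit
      rwa [IsUnit.unit_spec] at this
    have hc2 : (D:ℤ) ∣ ((B0:ℤ) - u) := by
      have : (((B0:ℤ) - u : ℤ) : ZMod D) = 0 := by
        push_cast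
        rw [hB0cast]
        ring
      rwa [ZMod.intCast_zmod_eq_zero_iff_dvd] at this
    rw [if_pos ⟨hc1, hc2⟩]
    apply eC_congr hD.ne'
    have : ((b * ((((B0 : ZMod D)⁻¹).val : ℕ) : ℤ) - uinv * b : ℤ) : ZMod D) = 0 := by
      push_cast
      rw [ZMod.natCast_val, ZMod.cast_id, hB0cast, hinv]
      ring
    rwa [ZMod.intCast_zmod_eq_zero_iff_dvd] at this
  · intro B hB hBne
    rw [if_neg]
    rintro ⟨-, hdvd⟩
    apply hBne
    have h1 : ((B:ℕ) : ZMod D) = (u : ZMod D) := by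
      have := (ZMod.intCast_zmod_eq_zero_iff_dvd _ D).2 hdvd
      push_cast at this
      linear_combination this
    have h2 : (B : ZMod D).val = B0 := by rw [h1]
    rwa [ZMod.val_cast_of_lt (Finset.mem_range.1 hB)] at h2

lemma sum_eval_zero (D p : ℕ) (hpD : p ∣ D) (hp : 1 < p) (u : ℤ) (hpu : (p:ℤ) ∣ u) (f : ℕ → ℂ) :
    (∑ B ∈ Finset.range D, if Nat.gcd B D = 1 ∧ (D:ℤ) ∣ ((B:ℤ) - u) then f B else 0) = 0 := by
  apply Finset.sum_eq_zero
  intro B _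
  rw [if_neg]
  rintro ⟨hgcd, hdvd⟩
  have hpB : (p:ℤ) ∣ (B:ℤ) := by
    have h1 : (p:ℤ) ∣ ((B:ℤ) - u) := dvd_trans (Int.natCast_dvd_natCast.2 hpD) hdvd
    have := dvd_add h1 hpu
    simpa using this
  have hpBn : p ∣ B := Int.ofNat_dvd.mp hpB
  have : p ∣ 1 := hgcd ▸ Nat.dvd_gcd hpBn hpD
  exact absurd (Nat.le_of_dvd one_pos this) (not_le.2 hp)

lemma sum_eval_coprime' (D : ℕ) (hD : 0 < D) (a t tinv : ℤ)
    (h : (t : ZMod D) * (tinv : ZMod D) = 1) :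
    (∑ B ∈ Finset.range D, if Nat.gcd B D = 1 ∧ (D:ℤ) ∣ (((((B : ZMod D)⁻¹).val : ℕ) : ℤ) - t) then
        eC (((a * (B:ℤ) : ℤ) : ℝ) / (D:ℝ)) else 0)
      = eC (((tinv * a : ℤ) : ℝ) / (D:ℝ)) := by
  haveI : NeZero D := ⟨hD.ne'⟩
  have h' : (tinv : ZMod D) * (t : ZMod D) = 1 := by rw [mul_comm]; exact h
  have hunit_t : IsUnit (t : ZMod D) := IsUnit.of_mul_eq_one _ h
  have hunit_ti : IsUnit (tinv : ZMod D) := IsUnit.of_mul_eq_one _ h'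
  set B0 := (tinv : ZMod D).val with hB0
  have hB0cast : ((B0 : ℕ) : ZMod D) = (tinv : ZMod D) := by
    rw [hB0, ZMod.natCast_val, ZMod.cast_id]
  have hinv : ((tinv : ZMod D))⁻¹ = (t : ZMod D) := by
    calc (tinv : ZMod D)⁻¹ = (tinv : ZMod D)⁻¹ * ((tinv : ZMod D) * (t : ZMod D)) := by
          rw [h', mul_one]
      _ = ((tinv : ZMod D)⁻¹ * (tinv : ZMod D)) * (t : ZMod D) := by ring
      _ = (t : ZMod D) := by rw [ZMod.inv_mul_of_unit _ hunit_ti, one_mul]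
  rw [Finset.sum_eq_single_of_mem B0 (Finset.mem_range.2 (ZMod.val_lt _))]
  · have hc1 : Nat.gcd B0 D = 1 := by
      have := ZMod.val_coe_unit_coprime hunit_ti.unit
      rwa [IsUnit.unit_spec] at this
    have hc2 : (D:ℤ) ∣ ((((((B0:ℕ) : ZMod D)⁻¹).val : ℕ) : ℤ) - t) := by
      have : (((((((B0:ℕ) : ZMod D)⁻¹).val : ℕ) : ℤ) - t : ℤ) : ZMod D) = 0 := by
        push_cast
        rw [ZMod.natCast_val, ZMod.cast_id, hB0cast, hinv]
        ring
      rwa [ZMod.intCast_zmod_eq_zero_iff_dvd] at this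
    rw [if_pos ⟨hc1, hc2⟩]
    apply eC_congr hD.ne'
    have : ((a * (B0:ℤ) - tinv * a : ℤ) : ZMod D) = 0 := by
      push_cast
      rw [hB0cast]
      ring
    rwa [ZMod.intCast_zmod_eq_zero_iff_dvd] at this
  · intro B hB hBne
    rw [if_neg]
    rintro ⟨hgcd, hdvd⟩
    apply hBne
    have hunitB : IsUnit (B : ZMod D) := (ZMod.isUnit_iff_coprime B D).2 hgcd
    have h1 : ((B : ZMod D))⁻¹ = (t : ZMod D) := by
      have := (ZMod.intCast_zmod_eq_zero_iff_dvd _ D).2 hdvd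
      push_cast at this
      rw [ZMod.natCast_val, ZMod.cast_id] at this
      linear_combination this
    have hBt : (B : ZMod D) * (t : ZMod D) = 1 := by
      rw [← h1]; exact ZMod.mul_inv_of_unit _ hunitB
    have h2 : (B : ZMod D) = (tinv : ZMod D) := by
      calc (B : ZMod D) = (B : ZMod D) * ((t : ZMod D) * (tinv : ZMod D)) := by rw [h, mul_one]
        _ = ((B : ZMod D) * (t : ZMod D)) * (tinv : ZMod D) := by ring
        _ = (tinv : ZMod D) := by rw [hBt, one_mul]
    have h3 : (B : ZMod D).val = B0 := by rw [h2]
    rwa [ZMod.val_cast_of_lt (Finset.mem_range.1 hB)] at h3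

lemma sum_eval_zero' (D p : ℕ) (hpD : p ∣ D) (hD : 0 < D) (hp : 1 < p) (t : ℤ) (hpt : (p:ℤ) ∣ t) (a : ℤ) :
    (∑ B ∈ Finset.range D, if Nat.gcd B D = 1 ∧ (D:ℤ) ∣ (((((B : ZMod D)⁻¹).val : ℕ) : ℤ) - t) then
        eC (((a * (B:ℤ) : ℤ) : ℝ) / (D:ℝ)) else 0) = 0 := by
  haveI : NeZero D := ⟨hD.ne'⟩
  apply Finset.sum_eq_zero
  intro B _
  rw [if_neg]
  rintro ⟨hgcd, hdvd⟩
  have hunitB : IsUnit (B : ZMod D) := (ZMod.isUnit_iff_coprime B D).2 hgcd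
  set w : ℕ := ((B : ZMod D)⁻¹).val with hw
  have hDw : (D:ℤ) ∣ ((w:ℤ) * (B:ℤ) - 1) := by
    have : (((w:ℤ) * (B:ℤ) - 1 : ℤ) : ZMod D) = 0 := by
      push_cast
      rw [hw, ZMod.natCast_val, ZMod.cast_id, ZMod.inv_mul_of_unit _ hunitB]
      ring
    rwa [ZMod.intCast_zmod_eq_zero_iff_dvd] at this
  have hpw : (p:ℤ) ∣ (w:ℤ) := by
    have h1 : (p:ℤ) ∣ ((w:ℤ) - t) := dvd_trans (Int.natCast_dvd_natCast.2 hpD) hdvd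
    have := dvd_add h1 hpt
    simpa using this
  have hp1 : (p:ℤ) ∣ 1 := by
    have h1 : (p:ℤ) ∣ ((w:ℤ) * (B:ℤ) - 1) := dvd_trans (Int.natCast_dvd_natCast.2 hpD) hDw
    have h2 : (p:ℤ) ∣ (w:ℤ) * (B:ℤ) := Dvd.dvd.mul_right hpw _
    have := dvd_sub h2 h1
    simpa using this
  have : (p:ℤ) ≤ 1 := Int.le_of_dvd one_pos hp1
  omega

/-- Evaluation of `Ŝ` when one modulus is `1`. -/
theorem Shat_modulus_one (p : ℕ) (hp : p.Prime) (k l : ℕ) (hk : 1 ≤ k) (hl : 1 ≤ l)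
    (a b u t : ℤ) (hb : Int.gcd b p = 1) (ha : Int.gcd a p = 1) :
    ((Int.gcd u p = 1 → ∀ uinv : ℤ, u * uinv ≡ 1 [ZMOD ((p : ℤ) ^ l)] →
        Shat a u t b 1 (p ^ l) = eC (((uinv * b : ℤ) : ℝ) / ((p : ℝ) ^ l))) ∧
      ((p : ℤ) ∣ u → Shat a u t b 1 (p ^ l) = 0)) ∧
    ((Int.gcd t p = 1 → ∀ tinv : ℤ, t * tinv ≡ 1 [ZMOD ((p : ℤ) ^ k)] →
        Shat a u t b (p ^ k) 1 = eC (((tinv * a : ℤ) : ℝ) / ((p : ℝ) ^ k))) ∧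
      ((p : ℤ) ∣ t → Shat a u t b (p ^ k) 1 = 0)) := by
  have hDl : 0 < p ^ l := pow_pos hp.pos l
  have hDk : 0 < p ^ k := pow_pos hp.pos k
  have hcastl : ((p:ℤ))^l = ((p^l : ℕ) : ℤ) := by push_cast; ring
  have hcastk : ((p:ℤ))^k = ((p^k : ℕ) : ℤ) := by push_cast; ring
  have hcastlR : ((p^l : ℕ) : ℝ) = (p:ℝ)^l := by push_cast; ring
  have hcastkR : ((p^k : ℕ) : ℝ) = (p:ℝ)^k := by push_cast; ring
  refine ⟨⟨?_, ?_⟩, ?_, ?_⟩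
  · intro hu uinv huinv
    rw [hcastl] at huinv
    have h' : ((u * uinv : ℤ) : ZMod (p^l)) = ((1:ℤ) : ZMod (p^l)) :=
      (ZMod.intCast_eq_intCast_iff _ _ _).2 huinv
    push_cast at h'
    rw [Shat_one_left (p^l) hDl a u t b, sum_eval_coprime (p^l) hDl b u uinv h', hcastlR]
  · intro hpu
    rw [Shat_one_left (p^l) hDl a u t b]
    exact sum_eval_zero (p^l) p (dvd_pow_self p (by omega)) hp.one_lt u hpu _
  · intro ht tinv htinv
    rw [hcastk] at htinv
    have h' : ((t * tinv : ℤ) : ZMod (p^k)) = ((1:ℤ) : ZMod (p^k)) :=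
      (ZMod.intCast_eq_intCast_iff _ _ _).2 htinv
    push_cast at h'
    rw [Shat_one_right (p^k) hDk a u t b, sum_eval_coprime' (p^k) hDk a t tinv h', hcastkR]
  · intro hpt
    rw [Shat_one_right (p^k) hDk a u t b]
    exact sum_eval_zero' (p^k) p (dvd_pow_self p (by omega)) hDk hp.one_lt t hpt a
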